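/- arXiv:2306.10160 — 3 statements merged into one kernel-verified Lean document; each statement's English description precedes it below -/
import Mathlib

section
/- On the probability simplex Δ^1 ⊂ ℝ^2, the L^∞ norm score function s(p) = max(p_1, p_2) and the negative entropy score function ŝ(p) = p_1 log(p_1) + p_2 log(p_2) (with the convention 0·log 0 = 0) are order-isomorphic: for all p, q ∈ Δ^1, max(p_1,p_2) < max(q_1,q_2) ⟺ ŝ(p) < ŝ(q), and max(p_1,p_2) = max(q_1,q_2) ⟺ ŝ(p) = ŝ(q). -/
/-- Two score functions on the probability simplex `Δ^{k-1} ⊂ ℝ^k` are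
order-isomorphic if they induce the same (strict) ordering and the same
equalities on all pairs of points of the simplex. -/
def OrderIsomorphic (k : ℕ) (s sHat : (Fin k → ℝ) → ℝ) : Prop :=
  ∀ p ∈ stdSimplex ℝ (Fin k), ∀ q ∈ stdSimplex ℝ (Fin k),
    (s p < s q ↔ sHat p < sHat q) ∧ (s p = s q ↔ sHat p = sHat q)

noncomputable def gEnt : ℝ → ℝ := fun x => x * Real.log x + (1 - x) * Real.log (1 - x)

lemma gEnt_strictMonoOn : StrictMonoOn gEnt (Set.Icc (1/2 : ℝ) 1) := by
  have hc : ContinuousOn gEnt (Set.Icc (1/2 : ℝ) 1) := by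
    apply ContinuousOn.add
    · exact (Real.continuous_mul_log).continuousOn
    · exact (Real.continuous_mul_log.comp (continuous_const.sub continuous_id)).continuousOn
  apply strictMonoOn_of_deriv_pos (convex_Icc _ _) hc
  intro x hx
  rw [interior_Icc] at hx
  obtain ⟨hx1, hx2⟩ := hx
  have hx0 : 0 < x := by linarith
  have h1x : 0 < 1 - x := by linarith
  have hd : HasDerivAt gEnt (Real.log x - Real.log (1 - x)) x := by
    have h1 : HasDerivAt (fun y : ℝ => y * Real.log y) (Real.log x + 1) x :=
      Real.hasDerivAt_mul_log (ne_of_gt hx0)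
    have h2 : HasDerivAt (fun y : ℝ => (1 - y) * Real.log (1 - y))
        ((Real.log (1 - x) + 1) * (-1)) x := by
      have hsub : HasDerivAt (fun y : ℝ => 1 - y) (-1) x := by
        exact (hasDerivAt_id' x).const_sub 1
      exact (Real.hasDerivAt_mul_log (ne_of_gt h1x)).comp x hsub
    have := h1.add h2
    exact this.congr_deriv (by ring)
  rw [hd.deriv]
  have : Real.log (1 - x) < Real.log x := Real.log_lt_log h1x (by linarith)
  linarith

lemma simplex_facts {p : Fin 2 → ℝ} (hp : p ∈ stdSimplex ℝ (Fin 2)) :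
    (p 0 * Real.log (p 0) + p 1 * Real.log (p 1) = gEnt (max (p 0) (p 1))) ∧
    max (p 0) (p 1) ∈ Set.Icc (1/2 : ℝ) 1 := by
  obtain ⟨hnn, hsum⟩ := hp
  rw [Fin.sum_univ_two] at hsum
  have h0 := hnn 0
  have h1 := hnn 1
  constructor
  · rcases le_total (p 0) (p 1) with h | h
    · rw [max_eq_right h]
      have : 1 - p 1 = p 0 := by linarith
      unfold gEnt
      rw [this]
      ring
    · rw [max_eq_left h]
      have : 1 - p 0 = p 1 := by linarith
      unfold gEnt
      rw [this]
  · constructor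
    · rcases le_total (p 0) (p 1) with h | h
      · rw [max_eq_right h]; linarith
      · rw [max_eq_left h]; linarith
    · apply max_le <;> linarith

/- Note: `Real.log 0 = 0` in Mathlib, so `p i * Real.log (p i)` implements the
convention `0 · log 0 = 0`. -/
theorem linf_negEntropy_orderIsomorphic_binary :
    OrderIsomorphic 2 (fun p => max (p 0) (p 1))
      (fun p => p 0 * Real.log (p 0) + p 1 * Real.log (p 1)) := by
  intro p hp q hq
  obtain ⟨hpe, hpm⟩ := simplex_facts hp
  obtain ⟨hqe, hqm⟩ := simplex_facts hq
  simp only [hpe, hqe]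
  constructor
  · exact (gEnt_strictMonoOn.lt_iff_lt hpm hqm).symm
  · exact ⟨fun h => by rw [h], fun h => gEnt_strictMonoOn.injOn hpm hqm h⟩
end

section
/- On the interior of the probability simplex Δ^1 ⊂ ℝ^2, the L^∞ norm score function s(p) = max(p_1, p_2) and the symmetrized Kullback–Leibler divergence to the uniform vector (which the paper calls the Jensen–Shannon distance to uniform), ŝ(p) = (1/2)·[p_1·log(p_1/(1/2)) + p_2·log(p_2/(1/2)) + (1/2)·log((1/2)/p_1) + (1/2)·log((1/2)/p_2)], are order-isomorphic: for all p, q ∈ Δ^1 with p_1, p_2, q_1, q_2 > 0, max(p_1,p_2) < max(q_1,q_2) ⟺ ŝ(p) < ŝ(q), and max(p_1,p_2) = max(q_1,q_2) ⟺ ŝ(p) = ŝ(q). -/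
noncomputable def gfun (x : ℝ) : ℝ := (1/2) * ((x - 1/2) * (Real.log x - Real.log (1 - x)))

lemma gfun_hasDeriv {x : ℝ} (hx0 : 0 < x) (hx1 : x < 1) :
    HasDerivAt gfun
      ((1/2) * ((Real.log x - Real.log (1-x)) + (x - 1/2) * (1/x + 1/(1-x)))) x := by
  have h1 : HasDerivAt (fun x : ℝ => x - 1/2) 1 x := (hasDerivAt_id x).sub_const _
  have h2 : HasDerivAt Real.log (1/x) x := by
    simpa [one_div] using Real.hasDerivAt_log hx0.ne'
  have h3 : HasDerivAt (fun x : ℝ => 1 - x) (-1) x := by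
    simpa using (hasDerivAt_id' x).const_sub (1:ℝ)
  have h4 : HasDerivAt (fun x : ℝ => Real.log (1 - x)) (-1/(1-x)) x := by
    simpa using h3.log (by linarith : (1:ℝ) - x ≠ 0)
  have h6 := (h1.mul (h2.sub h4)).const_mul (1/2 : ℝ)
  refine h6.congr_deriv ?_
  simp only [Pi.sub_apply]; ring

lemma gfun_strictMonoOn : StrictMonoOn gfun (Set.Ico (1/2 : ℝ) 1) := by
  apply strictMonoOn_of_deriv_pos (convex_Ico _ _)
  · intro x hx
    exact (gfun_hasDeriv (by linarith [hx.1]) hx.2).differentiableAt.continuousAt.continuousWithinAt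
  · intro x hx
    rw [interior_Ico] at hx
    obtain ⟨hx1, hx2⟩ := hx
    have hx0 : 0 < x := by linarith
    rw [(gfun_hasDeriv hx0 hx2).deriv]
    have hlog : Real.log (1 - x) < Real.log x :=
      Real.log_lt_log (by linarith) (by linarith)
    have h1 : (0:ℝ) < 1/x + 1/(1-x) :=
      add_pos (one_div_pos.mpr hx0) (one_div_pos.mpr (by linarith))
    nlinarith

lemma score_eq (p : Fin 2 → ℝ) (hsum : p 0 + p 1 = 1) (h0 : 0 < p 0) (h1 : 0 < p 1) :
    (1 / 2) * (p 0 * Real.log (p 0 / (1 / 2)) + p 1 * Real.log (p 1 / (1 / 2))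
      + (1 / 2) * Real.log ((1 / 2) / p 0) + (1 / 2) * Real.log ((1 / 2) / p 1))
      = gfun (max (p 0) (p 1)) := by
  have key : ∀ a : ℝ, 0 < a → a < 1 →
      (1 / 2) * (a * Real.log (a / (1 / 2)) + (1-a) * Real.log ((1-a) / (1 / 2))
        + (1 / 2) * Real.log ((1 / 2) / a) + (1 / 2) * Real.log ((1 / 2) / (1-a)))
        = gfun a := by
    intro a ha0 ha1
    rw [Real.log_div ha0.ne' (by norm_num), Real.log_div (by linarith : (1:ℝ)-a ≠ 0) (by norm_num),
        Real.log_div (by norm_num) ha0.ne', Real.log_div (by norm_num) (by linarith : (1:ℝ)-a ≠ 0)]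
    unfold gfun; ring
  have e1 : p 1 = 1 - p 0 := by linarith
  have e0 : p 0 = 1 - p 1 := by linarith
  rcases le_total (p 1) (p 0) with h | h
  · rw [max_eq_left h, e1]
    exact key (p 0) h0 (by linarith)
  · rw [max_eq_right h, e0]
    linear_combination key (p 1) h1 (by linarith)

/-- Order-isomorphism on the interior of the binary probability simplex:
for all `p, q ∈ Δ^1` with strictly positive coordinates, the `L^∞` norm and
the symmetrized KL divergence to the uniform vector `(1/2, 1/2)` induce the
same ordering and equalities. -/
theorem linf_symKL_orderIsomorphic_binary_interior :
    ∀ p ∈ stdSimplex ℝ (Fin 2), ∀ q ∈ stdSimplex ℝ (Fin 2),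
      (∀ i, 0 < p i) → (∀ i, 0 < q i) →
      ((max (p 0) (p 1) < max (q 0) (q 1) ↔
          (1 / 2) * (p 0 * Real.log (p 0 / (1 / 2)) + p 1 * Real.log (p 1 / (1 / 2))
            + (1 / 2) * Real.log ((1 / 2) / p 0) + (1 / 2) * Real.log ((1 / 2) / p 1)) <
          (1 / 2) * (q 0 * Real.log (q 0 / (1 / 2)) + q 1 * Real.log (q 1 / (1 / 2))
            + (1 / 2) * Real.log ((1 / 2) / q 0) + (1 / 2) * Real.log ((1 / 2) / q 1))) ∧
       (max (p 0) (p 1) = max (q 0) (q 1) ↔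
          (1 / 2) * (p 0 * Real.log (p 0 / (1 / 2)) + p 1 * Real.log (p 1 / (1 / 2))
            + (1 / 2) * Real.log ((1 / 2) / p 0) + (1 / 2) * Real.log ((1 / 2) / p 1)) =
          (1 / 2) * (q 0 * Real.log (q 0 / (1 / 2)) + q 1 * Real.log (q 1 / (1 / 2))
            + (1 / 2) * Real.log ((1 / 2) / q 0) + (1 / 2) * Real.log ((1 / 2) / q 1)))) := by
  intro p hp q hq hpp hqq
  have hpsum : p 0 + p 1 = 1 := by simpa [Fin.sum_univ_two] using hp.2
  have hqsum : q 0 + q 1 = 1 := by simpa [Fin.sum_univ_two] using hq.2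
  have hmp : max (p 0) (p 1) ∈ Set.Ico (1/2 : ℝ) 1 := by
    constructor
    · rcases max_cases (p 0) (p 1) with ⟨h, h'⟩ | ⟨h, h'⟩ <;> rw [h] <;> linarith
    · exact max_lt (by linarith [hpp 1]) (by linarith [hpp 0])
  have hmq : max (q 0) (q 1) ∈ Set.Ico (1/2 : ℝ) 1 := by
    constructor
    · rcases max_cases (q 0) (q 1) with ⟨h, h'⟩ | ⟨h, h'⟩ <;> rw [h] <;> linarith
    · exact max_lt (by linarith [hqq 1]) (by linarith [hqq 0])
  rw [score_eq p hpsum (hpp 0) (hpp 1), score_eq q hqsum (hqq 0) (hqq 1)]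
  exact ⟨(gfun_strictMonoOn.lt_iff_lt hmp hmq).symm,
    ⟨fun h => by rw [h], fun h => gfun_strictMonoOn.injOn hmp hmq h⟩⟩
end

section
/- (Ordering Lemma) Let s, ŝ : Δ^{k-1} → ℝ be order-isomorphic score functions, let X be a type, f : X → Δ^{k-1}, let D^s and D^t be nonempty finite sets of elements of X, and let Γ^s ∈ ℝ. For a score function u, define the estimate with threshold t on a finite set D as est_u(t, D) = |{x ∈ D : u(f(x)) < t}| / |D|. Suppose p ∈ D^s minimizes |Γ^s − est_s(s(f(q)), D^s)| over all q ∈ D^s. Then p also minimizes |Γ^s − est_{ŝ}(ŝ(f(q)), D^s)| over all q ∈ D^s, and the resulting target estimates agree: est_s(s(f(p)), D^t) = est_{ŝ}(ŝ(f(p)), D^t). -/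
open scoped Classical

/-- The ATC estimate: the fraction of points `x` of the finite set `D` whose
score `u (f x)` falls below the threshold `t`. -/
noncomputable def est {k : ℕ} {X : Type*} (u : (Fin k → ℝ) → ℝ)
    (f : X → (Fin k → ℝ)) (t : ℝ) (D : Finset X) : ℝ :=
  ((D.filter (fun x => u (f x) < t)).card : ℝ) / (D.card : ℝ)

/-- The Ordering Lemma: for order-isomorphic score functions, a minimizer of
the source-calibration objective for `s` is also a minimizer for `sHat`, and the
resulting target estimates agree. -/
theorem ordering_lemma {k : ℕ} {X : Type*}
    (s sHat : (Fin k → ℝ) → ℝ) (hiso : OrderIsomorphic k s sHat)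
    (f : X → (Fin k → ℝ)) (hf : ∀ x, f x ∈ stdSimplex ℝ (Fin k))
    (Ds Dt : Finset X) (hDs : Ds.Nonempty) (hDt : Dt.Nonempty)
    (Γs : ℝ) (p : X) (hp : p ∈ Ds)
    (hmin : ∀ q ∈ Ds, |Γs - est s f (s (f p)) Ds| ≤ |Γs - est s f (s (f q)) Ds|) :
    (∀ q ∈ Ds, |Γs - est sHat f (sHat (f p)) Ds| ≤ |Γs - est sHat f (sHat (f q)) Ds|) ∧
    est s f (s (f p)) Dt = est sHat f (sHat (f p)) Dt := by
  have key : ∀ (q : X) (D : Finset X),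
      est s f (s (f q)) D = est sHat f (sHat (f q)) D := by
    intro q D
    unfold est
    congr 2
    apply congrArg
    apply Finset.filter_congr
    intro x _
    simpa using (hiso (f x) (hf x) (f q) (hf q)).1
  refine ⟨fun q hq => ?_, key p Dt⟩
  rw [← key p Ds, ← key q Ds]
  exact hmin q hq
end
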